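/- Let φ be a C² weight on ℂⁿ with m·E ≤ Hess_ℝ φ ≤ M·E, and suppose the Bergman kernel K of F²(φ) satisfies |K(z,w)| ≤ C₁ e^{φ(z)+φ(w)} e^{−θ|z−w|} for some θ, C₁ > 0 and |K(z,z)| ≥ C₂ e^{2φ(z)}. Then for every 0 < p < ∞ there is C > 0 such that the normalized kernels k_z = K(·,z)/√K(z,z) satisfy C^{−1} ≤ ‖k_z‖_{p,φ} ≤ C for all z ∈ ℂⁿ, where ‖f‖_{p,φ}^p = ∫ |f|^p e^{−pφ} dv. -/

import Mathlib

open MeasureTheory Metric Complex Filter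
open scoped ENNReal NNReal Topology

noncomputable section

variable {E : Type*} [NormedAddCommGroup E] [InnerProductSpace ℂ E] [FiniteDimensional ℂ E]
  [MeasurableSpace E] [BorelSpace E]

instance : InnerProductSpace ℝ E := InnerProductSpace.rclikeToReal ℂ E

/-- `G_{q,r}(f)(z)`: integral distance to holomorphic functions on `B(z,r)`. -/
def G (q r : ℝ) (f : E → ℂ) (z : E) : ℝ≥0∞ :=
  ⨅ h : {h : E → ℂ // DifferentiableOn ℂ h (ball z r)},
    ((volume (ball z r))⁻¹ * ∫⁻ w in ball z r, (‖f w - h.1 w‖₊ : ℝ≥0∞) ^ q) ^ (1/q)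

/-- membership in `L^q_loc`. -/
def LocLq (q : ℝ) (f : E → ℂ) : Prop :=
  ∀ (z : E) (r : ℝ), 0 < r → MemLp f (ENNReal.ofReal q) (volume.restrict (ball z r))

/-- A weight has Hessian comparable to the identity: `m·E ≤ Hess_ℝ φ ≤ M·E`. -/
def HessBounds (m M : ℝ) (φ : E → ℝ) : Prop :=
  ContDiff ℝ 2 φ ∧ ∀ x v : E,
    m * ‖v‖ ^ 2 ≤ fderiv ℝ (fderiv ℝ φ) x v v ∧ fderiv ℝ (fderiv ℝ φ) x v v ≤ M * ‖v‖ ^ 2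

/- ### Auxiliary lemmas -/

lemma aux_circle_avg {g : ℂ → ℂ} (hg : Differentiable ℂ g) :
    ∫ θ in (0:ℝ)..(2*Real.pi), g (circleMap 0 1 θ) = (2*Real.pi : ℂ) * g 0 := by
  have h := circleIntegral_sub_center_inv_smul_of_differentiable_on_off_countable
    (R := 1) one_pos (f := g) (c := 0) (s := (∅ : Set ℂ)) Set.countable_empty
    hg.continuous.continuousOn (fun z _ => hg z)
  rw [circleIntegral] at h
  have hne : ∀ θ : ℝ, circleMap 0 1 θ ≠ 0 := fun θ => by
    simp [circleMap_eq_center_iff]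
  have heq : ∀ θ : ℝ, deriv (circleMap 0 1) θ • ((circleMap 0 1 θ - 0)⁻¹ • g (circleMap 0 1 θ))
      = I • g (circleMap 0 1 θ) := by
    intro θ
    rw [deriv_circleMap]
    simp only [sub_zero, smul_eq_mul]
    field_simp [hne θ]
  simp only [heq] at h
  rw [intervalIntegral.integral_smul] at h
  have h2 : I • ∫ θ in (0:ℝ)..(2*Real.pi), g (circleMap 0 1 θ)
      = I • ((2*Real.pi : ℂ) * g 0) := by
    rw [h]; simp [smul_eq_mul]; ring
  exact smul_right_injective ℂ I_ne_zero h2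

/-- rotation by a unit complex number as a real linear isometry equiv -/
def rotE (u : ℂ) (hu : ‖u‖ = 1) : E ≃ₗᵢ[ℝ] E where
  toFun v := u • v
  invFun v := u⁻¹ • v
  map_add' := smul_add u
  map_smul' c v := smul_comm u c v
  left_inv v := by
    have hu0 : u ≠ 0 := by intro h; rw [h] at hu; simp at hu
    show u⁻¹ • u • v = v
    rw [smul_smul, inv_mul_cancel₀ hu0, one_smul]
  right_inv v := by
    have hu0 : u ≠ 0 := by intro h; rw [h] at hu; simp at hu
    show u • u⁻¹ • v = v
    rw [smul_smul, mul_inv_cancel₀ hu0, one_smul]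
  norm_map' v := by simp [norm_smul, hu]

lemma aux_rot_integral (u : ℂ) (hu : ‖u‖ = 1) (f : E → ℂ) (r : ℝ) :
    ∫ v in ball (0:E) r, f (u • v) = ∫ v in ball (0:E) r, f v := by
  have hmp := (rotE (E := E) u hu).measurePreserving
  have hemb := ((rotE (E := E) u hu).toHomeomorph).measurableEmbedding
  have hpre : (rotE (E := E) u hu) ⁻¹' (ball (0:E) r) = ball (0:E) r := by
    ext v
    simp only [Set.mem_preimage, mem_ball, dist_zero_right]
    constructor
    · intro h
      have h2 : ‖(rotE (E := E) u hu) v‖ = ‖v‖ := (rotE (E := E) u hu).norm_map v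
      rwa [h2] at h
    · intro h
      rw [(rotE (E := E) u hu).norm_map v]; exact h
  have := hmp.setIntegral_preimage_emb hemb f (ball (0:E) r)
  rw [hpre] at this
  exact this

/-- Mean value property over balls for entire functions. -/
lemma aux_meanValue {h : E → ℂ} (hh : Differentiable ℂ h) (z : E) (r : ℝ) :
    ∫ w in ball z r, h w = (volume (ball z r)).toReal • h z := by
  set H : E → ℂ := fun v => h (z + v) with hH
  have hHdiff : Differentiable ℂ H := hh.comp (differentiable_const _ |>.add differentiable_id)
  have htrans : ∫ w in ball z r, h w = ∫ v in ball (0:E) r, H v := by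
    have hemb := (Homeomorph.addLeft z).measurableEmbedding (γ := E) (γ₂ := E)
    have hmp := measurePreserving_add_left (volume : Measure E) z
    have hpre : (fun v => z + v) ⁻¹' (ball z r) = ball (0:E) r := by
      ext v; simp [mem_ball, dist_eq_norm]
    have := hmp.setIntegral_preimage_emb hemb h (ball z r)
    rw [hpre] at this
    exact this.symm
  have hcavg : ∀ v : E, ∫ θ in (0:ℝ)..(2*Real.pi), H (circleMap 0 1 θ • v)
      = (2*Real.pi : ℂ) * H 0 := by
    intro v
    have hg : Differentiable ℂ (fun ζ : ℂ => H (ζ • v)) :=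
      hHdiff.comp (differentiable_id.smul_const v)
    have := aux_circle_avg hg
    simpa using this
  have hrot : ∀ θ : ℝ, ∫ v in ball (0:E) r, H (circleMap 0 1 θ • v)
      = ∫ v in ball (0:E) r, H v := by
    intro θ
    exact aux_rot_integral (circleMap 0 1 θ) (by simp [circleMap]) H r
  set F : E → ℝ → ℂ := fun v θ => H (circleMap 0 1 θ • v) with hF
  have hFcont : Continuous (Function.uncurry F) := by
    apply hHdiff.continuous.comp
    exact (((continuous_circleMap 0 1).comp continuous_snd).smul continuous_fst)
  have hint : Integrable (Function.uncurry F)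
      ((volume.restrict (ball (0:E) r)).prod (volume.restrict (Set.Ioc (0:ℝ) (2*Real.pi)))) := by
    rw [Measure.prod_restrict]
    apply IntegrableOn.mono_set (t := closedBall (0:E) r ×ˢ Set.Icc (0:ℝ) (2*Real.pi))
    · exact hFcont.continuousOn.integrableOn_compact
        ((isCompact_closedBall _ _).prod isCompact_Icc)
    · exact Set.prod_mono ball_subset_closedBall Set.Ioc_subset_Icc_self
  have hswap := integral_integral_swap hint
  have hLHS : ∫ v in ball (0:E) r, ∫ θ in Set.Ioc (0:ℝ) (2*Real.pi), F v θ
      = (volume (ball (0:E) r)).toReal • ((2*Real.pi : ℂ) * H 0) := by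
    rw [setIntegral_congr_fun measurableSet_ball (g := fun _ => (2*Real.pi : ℂ) * H 0)]
    · rw [setIntegral_const]; rfl
    · intro v _
      have := hcavg v
      rwa [intervalIntegral.integral_of_le Real.two_pi_pos.le] at this
  have hRHS : ∫ θ in Set.Ioc (0:ℝ) (2*Real.pi), ∫ v in ball (0:E) r, F v θ
      = (2*Real.pi : ℝ) • ∫ v in ball (0:E) r, H v := by
    rw [setIntegral_congr_fun measurableSet_Ioc (g := fun _ => ∫ v in ball (0:E) r, H v)]
    · rw [setIntegral_const]
      congr 1
      simp [Real.volume_Ioc, Real.two_pi_pos.le]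
    · intro θ _
      exact hrot θ
  rw [hLHS, hRHS] at hswap
  have h2π : (2*Real.pi : ℂ) ≠ 0 := by
    simp [Real.pi_ne_zero]
  rw [htrans]
  have heq : (2*Real.pi : ℂ) * ∫ v in ball (0:E) r, H v
      = (2*Real.pi : ℂ) * ((volume (ball (0:E) r)).toReal • H 0) := by
    calc (2*Real.pi : ℂ) * ∫ v in ball (0:E) r, H v
        = (2*Real.pi : ℝ) • ∫ v in ball (0:E) r, H v := by
          rw [Complex.real_smul]; push_cast; ring
      _ = (volume (ball (0:E) r)).toReal • ((2*Real.pi : ℂ) * H 0) := hswap.symm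
      _ = (2*Real.pi : ℂ) * ((volume (ball (0:E) r)).toReal • H 0) := by
          rw [Complex.real_smul, Complex.real_smul]; ring
  have hfin := mul_left_cancel₀ h2π heq
  rw [hfin, ← Measure.addHaar_ball_center (volume : Measure E) z]
  simp [hH]

/-- second-order Taylor upper bound -/
lemma aux_taylor_upper {φ : E → ℝ} (hφ2 : ContDiff ℝ 2 φ) {M : ℝ}
    (hub : ∀ x v : E, fderiv ℝ (fderiv ℝ φ) x v v ≤ M * ‖v‖ ^ 2)
    (z v : E) : φ (z + v) ≤ φ z + fderiv ℝ φ z v + M / 2 * ‖v‖ ^ 2 := by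
  have hφd : Differentiable ℝ φ := hφ2.differentiable (by norm_num)
  have hφ1 : ContDiff ℝ 1 (fderiv ℝ φ) := hφ2.fderiv_right (by norm_num)
  have hφ1d : Differentiable ℝ (fderiv ℝ φ) := hφ1.differentiable (by norm_num)
  set γ : ℝ → E := fun t => z + t • v with hγ
  have hγd : ∀ t : ℝ, HasDerivAt γ v t := by
    intro t
    simpa [hγ] using ((hasDerivAt_id t).smul_const v).const_add z
  have hd1 : ∀ t : ℝ, HasDerivAt (fun t => φ (γ t)) (fderiv ℝ φ (γ t) v) t := by
    intro t
    exact (hφd (γ t)).hasFDerivAt.comp_hasDerivAt t (hγd t)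
  have hd2 : ∀ t : ℝ, HasDerivAt (fun t => fderiv ℝ φ (γ t) v)
      (fderiv ℝ (fderiv ℝ φ) (γ t) v v) t := by
    intro t
    have h1 : HasDerivAt (fun t => fderiv ℝ φ (γ t)) (fderiv ℝ (fderiv ℝ φ) (γ t) v) t :=
      (hφ1d (γ t)).hasFDerivAt.comp_hasDerivAt t (hγd t)
    have := h1.clm_apply (hasDerivAt_const t v)
    simpa using this
  set g1' : ℝ → ℝ := fun t => fderiv ℝ φ z v + M * t * ‖v‖ ^ 2 - fderiv ℝ φ (γ t) v with hg1'
  set g1 : ℝ → ℝ := fun t => φ z + t * fderiv ℝ φ z v + M / 2 * t ^ 2 * ‖v‖ ^ 2 - φ (γ t) with hg1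
  have hg1'd : ∀ t : ℝ, HasDerivAt g1' (M * ‖v‖ ^ 2 - fderiv ℝ (fderiv ℝ φ) (γ t) v v) t := by
    intro t
    have h1 : HasDerivAt (fun t : ℝ => fderiv ℝ φ z v + M * t * ‖v‖ ^ 2)
        (M * ‖v‖ ^ 2) t := by
      have h0 : HasDerivAt (fun t : ℝ => M * t * ‖v‖ ^ 2) (M * ‖v‖ ^ 2) t := by
        simpa [mul_comm, mul_assoc, mul_left_comm] using
          ((hasDerivAt_id t).const_mul M).mul_const (‖v‖ ^ 2)
      simpa using h0.const_add (fderiv ℝ φ z v)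
    exact h1.sub (hd2 t)
  have hg1d : ∀ t : ℝ, HasDerivAt g1 (g1' t) t := by
    intro t
    have h1 : HasDerivAt (fun t : ℝ => φ z + t * fderiv ℝ φ z v + M / 2 * t ^ 2 * ‖v‖ ^ 2)
        (fderiv ℝ φ z v + M * t * ‖v‖ ^ 2) t := by
      have ha : HasDerivAt (fun t : ℝ => t * fderiv ℝ φ z v) (fderiv ℝ φ z v) t := by
        simpa using (hasDerivAt_id t).mul_const (fderiv ℝ φ z v)
      have hb : HasDerivAt (fun t : ℝ => M / 2 * t ^ 2 * ‖v‖ ^ 2) (M * t * ‖v‖ ^ 2) t := by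
        have h2 : HasDerivAt (fun t : ℝ => t ^ 2) (2 * t) t := by
          simpa using hasDerivAt_pow 2 t
        have := (h2.const_mul (M / 2)).mul_const (‖v‖ ^ 2)
        exact this.congr_deriv (by ring)
      exact ((ha.const_add (φ z)).add hb)
    exact h1.sub (hd1 t)
  have hg1'mono : Monotone g1' :=
    monotone_of_deriv_nonneg (fun t => (hg1'd t).differentiableAt)
      (fun t => by
        rw [(hg1'd t).deriv]
        have := hub (γ t) v
        linarith)
  have hg1'0 : g1' 0 = 0 := by simp [hg1', hγ]
  have hg1'nonneg : ∀ t : ℝ, 0 ≤ t → 0 ≤ g1' t := fun t ht => by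
    rw [← hg1'0]; exact hg1'mono ht
  have hg1mono : MonotoneOn g1 (Set.Icc 0 1) := by
    apply monotoneOn_of_deriv_nonneg (convex_Icc 0 1)
      (fun t _ => ((hg1d t).differentiableAt.continuousAt).continuousWithinAt)
      (fun t _ => (hg1d t).differentiableAt.differentiableWithinAt)
    intro t ht
    rw [interior_Icc] at ht
    rw [(hg1d t).deriv]
    exact hg1'nonneg t ht.1.le
  have := hg1mono (Set.mem_Icc.mpr ⟨le_rfl, zero_le_one⟩) (Set.mem_Icc.mpr ⟨zero_le_one, le_rfl⟩)
    zero_le_one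
  simp only [hg1, hγ, zero_smul, add_zero, one_smul, zero_mul, one_mul, mul_zero,
    zero_pow, one_pow] at this
  norm_num at this
  linarith

/-- Integrability of `exp (-c‖x‖)` in finite dimension. -/
lemma aux_integrable_exp_neg_norm {F : Type*} [NormedAddCommGroup F] [NormedSpace ℝ F]
    [FiniteDimensional ℝ F] [MeasurableSpace F] [BorelSpace F]
    {μ : Measure F} [μ.IsAddHaarMeasure] {c : ℝ} (hc : 0 < c) :
    Integrable (fun x : F => Real.exp (-(c * ‖x‖))) μ := by
  set n : ℕ := Module.finrank ℝ F + 1 with hn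
  have hnr : (Module.finrank ℝ F : ℝ) < (n : ℝ) := by
    rw [hn]; push_cast; linarith
  have hbound : ∀ x : F, Real.exp (-(c * ‖x‖))
      ≤ (Real.exp c * n.factorial / c ^ n) * (1 + ‖x‖) ^ (-(n:ℝ)) := by
    intro x
    have h1 : (c * (1 + ‖x‖)) ^ n / n.factorial ≤ Real.exp (c * (1 + ‖x‖)) := by
      calc (c * (1 + ‖x‖)) ^ n / n.factorial
          ≤ ∑ i ∈ Finset.range (n+1), (c * (1 + ‖x‖)) ^ i / i.factorial := by
            exact Finset.single_le_sum (f := fun i => (c * (1 + ‖x‖)) ^ i / (i.factorial:ℝ))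
              (fun i _ => by positivity) (Finset.self_mem_range_succ n)
        _ ≤ Real.exp (c * (1 + ‖x‖)) :=
            Real.sum_le_exp_of_nonneg (by positivity) (n+1)
    have h3 : Real.exp (-(c * (1 + ‖x‖))) ≤ n.factorial / (c * (1 + ‖x‖)) ^ n := by
      rw [Real.exp_neg, le_div_iff₀ (by positivity), inv_mul_le_iff₀ (Real.exp_pos _)]
      exact (div_le_iff₀ (by positivity : (0:ℝ) < (n.factorial:ℝ))).mp h1
    calc Real.exp (-(c * ‖x‖)) = Real.exp c * Real.exp (-(c * (1 + ‖x‖))) := by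
          rw [← Real.exp_add]; ring_nf
      _ ≤ Real.exp c * (n.factorial / (c * (1 + ‖x‖)) ^ n) := by
          exact mul_le_mul_of_nonneg_left h3 (Real.exp_pos c).le
      _ = (Real.exp c * n.factorial / c ^ n) * ((1 + ‖x‖) ^ n)⁻¹ := by
          rw [mul_pow]; field_simp
      _ = (Real.exp c * n.factorial / c ^ n) * (1 + ‖x‖) ^ (-(n:ℝ)) := by
          rw [Real.rpow_neg (by positivity), Real.rpow_natCast]
  have hint := (integrable_one_add_norm (E := F) (μ := μ) hnr).const_mul
    (Real.exp c * n.factorial / c ^ n)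
  refine hint.mono' ?_ ?_
  · exact (Real.continuous_exp.comp (continuous_const.mul continuous_norm).neg).aestronglyMeasurable
  · filter_upwards with x
    rw [Real.norm_eq_abs, abs_of_pos (Real.exp_pos _)]
    exact hbound x

set_option maxHeartbeats 1000000 in
/-- Under the kernel estimates, the normalized reproducing kernels
`k_z = K(·,z)/√K(z,z)` satisfy `C⁻¹ ≤ ‖k_z‖_{p,φ} ≤ C` uniformly in `z`. -/
theorem stmt13 (p m M θ C₁ C₂ : ℝ) (hp : 0 < p) (hm : 0 < m) (hmM : m ≤ M)
    (hθ : 0 < θ) (hC₁ : 0 < C₁) (hC₂ : 0 < C₂)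
    (φ : E → ℝ) (hφ : HessBounds m M φ)
    (K : E → E → ℂ) (hKanal : ∀ z : E, Differentiable ℂ (fun w => K w z))
    (hKup : ∀ z w : E, ‖K z w‖ ≤ C₁ * Real.exp (φ z + φ w) * Real.exp (-(θ * ‖z - w‖)))
    (hKdiag : ∀ z : E, (K z z).im = 0 ∧ C₂ * Real.exp (2 * φ z) ≤ (K z z).re) :
    ∃ C > (0 : ℝ), ∀ z : E,
      C⁻¹ ≤ (∫ w : E, ‖K w z / ((Real.sqrt ((K z z).re) : ℝ) : ℂ)‖ ^ p
          * Real.exp (-(p * φ w))) ^ (1/p) ∧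
      (∫ w : E, ‖K w z / ((Real.sqrt ((K z z).re) : ℝ) : ℂ)‖ ^ p
          * Real.exp (-(p * φ w))) ^ (1/p) ≤ C := by
  obtain ⟨hφ2, hφH⟩ := hφ
  have hM0 : 0 < M := lt_of_lt_of_le hm hmM
  have htay : ∀ z w : E, φ w ≤ φ z + fderiv ℝ φ z (w - z) + M / 2 * ‖w - z‖ ^ 2 := by
    intro z w
    have := aux_taylor_upper hφ2 (fun x v => (hφH x v).2) z (w - z)
    simpa using this
  set N : ℕ := ⌈p⌉₊ with hN
  have hpN : p ≤ (N : ℝ) := Nat.le_ceil p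
  set Iexp : ℝ := ∫ x : E, Real.exp (-(p * θ * ‖x‖)) with hIexp
  have hIexp0 : 0 ≤ Iexp := integral_nonneg fun x => (Real.exp_pos _).le
  set vol1 : ℝ := (volume (ball (0:E) 1)).toReal with hvol1
  have hvol1pos : 0 < vol1 := by
    apply ENNReal.toReal_pos
    · exact (measure_ball_pos volume 0 one_pos).ne'
    · exact measure_ball_lt_top.ne
  set cUp : ℝ := C₁ ^ p / C₂ ^ (p/2) * Iexp with hcUp
  set cLow : ℝ := vol1 * Real.exp (-(p*M/2)) * C₂ ^ N * (C₁ * Real.exp (M/2)) ^ (p - (N:ℝ))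
    / C₁ ^ (p/2) with hcLow
  have hcLowpos : 0 < cLow := by
    apply div_pos
    apply mul_pos
    apply mul_pos
    · exact mul_pos hvol1pos (Real.exp_pos _)
    · positivity
    · positivity
    · positivity
  refine ⟨max (cUp ^ (1/p)) ((cLow ^ (1/p))⁻¹),
    lt_of_lt_of_le (by positivity) (le_max_right _ _), ?_⟩
  intro z

  -- diagonal bounds at z
  have hKzzlow := (hKdiag z).2
  have hKzz : 0 < (K z z).re := lt_of_lt_of_le (by positivity) hKzzlow
  have hKzzup : (K z z).re ≤ C₁ * Real.exp (2 * φ z) := by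
    have h1 := hKup z z
    have h2 : (K z z).re ≤ ‖K z z‖ := by
      exact Complex.re_le_norm (K z z)
    calc (K z z).re ≤ ‖K z z‖ := h2
      _ ≤ C₁ * Real.exp (φ z + φ z) * Real.exp (-(θ * ‖z - z‖)) := h1
      _ = C₁ * Real.exp (2 * φ z) := by
          rw [sub_self, norm_zero, mul_zero, neg_zero, Real.exp_zero, mul_one, two_mul]
  set d : ℝ := Real.sqrt ((K z z).re) with hd
  have hdpos : 0 < d := Real.sqrt_pos.mpr hKzz
  set F : E → ℝ := fun w => ‖K w z / ((d : ℝ) : ℂ)‖ ^ p * Real.exp (-(p * φ w)) with hF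
  have hdp : d ^ p = (K z z).re ^ ((1/2) * p) := by
    rw [hd, Real.sqrt_eq_rpow, ← Real.rpow_mul hKzz.le]
  have hFeq : ∀ w, F w = ‖K w z‖ ^ p / d ^ p * Real.exp (-(p * φ w)) := by
    intro w
    rw [hF]
    simp only
    rw [norm_div, Complex.norm_real, Real.norm_eq_abs, abs_of_pos hdpos,
        Real.div_rpow (norm_nonneg _) hdpos.le]
  have hFnonneg : ∀ w, 0 ≤ F w := fun w => by
    rw [hF]; positivity
  have hdplow : C₂ ^ (p/2) * Real.exp (p * φ z) ≤ d ^ p := by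
    rw [hdp]
    have he : (C₂ * Real.exp (2 * φ z)) ^ ((1/2) * p)
        = C₂ ^ ((1/2) * p) * Real.exp (2 * φ z * ((1/2) * p)) := by
      rw [Real.mul_rpow hC₂.le (Real.exp_pos _).le, ← Real.exp_mul]
    calc C₂ ^ (p/2) * Real.exp (p * φ z)
        = (C₂ * Real.exp (2 * φ z)) ^ ((1/2) * p) := by
          rw [he, show ((1:ℝ)/2) * p = p/2 from by ring,
            show 2 * φ z * (p/2) = p * φ z from by ring]
      _ ≤ (K z z).re ^ ((1/2) * p) := Real.rpow_le_rpow (by positivity) hKzzlow (by positivity)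
  have hdpup : d ^ p ≤ C₁ ^ (p/2) * Real.exp (p * φ z) := by
    rw [hdp]
    have he : (C₁ * Real.exp (2 * φ z)) ^ ((1/2) * p)
        = C₁ ^ ((1/2) * p) * Real.exp (2 * φ z * ((1/2) * p)) := by
      rw [Real.mul_rpow hC₁.le (Real.exp_pos _).le, ← Real.exp_mul]
    calc (K z z).re ^ ((1/2) * p)
        ≤ (C₁ * Real.exp (2 * φ z)) ^ ((1/2) * p) :=
          Real.rpow_le_rpow hKzz.le hKzzup (by positivity)
      _ = C₁ ^ (p/2) * Real.exp (p * φ z) := by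
          rw [he, show ((1:ℝ)/2) * p = p/2 from by ring,
            show 2 * φ z * (p/2) = p * φ z from by ring]
  have hdppos : 0 < d ^ p := Real.rpow_pos_of_pos hdpos p
  -- algebra helper
  have halg : ∀ E1 E2 E3 X A B : ℝ, B ≠ 0 → E2 ≠ 0 → E1 * E3 = E2 →
      (A * E1 * X) / (B * E2) * E3 = A / B * X := by
    intro E1 E2 E3 X A B hB hE2 hE
    field_simp
    linear_combination A * X * hE
  -- pointwise upper bound
  have hup : ∀ w, F w ≤ C₁ ^ p / C₂ ^ (p/2) * Real.exp (-(p * θ * ‖w - z‖)) := by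
    intro w
    rw [hFeq w]
    have h1 : ‖K w z‖ ^ p
        ≤ C₁ ^ p * Real.exp (p * (φ w + φ z)) * Real.exp (-(p * θ * ‖w - z‖)) := by
      have h0 := Real.rpow_le_rpow (norm_nonneg _) (hKup w z) hp.le
      refine h0.trans_eq ?_
      rw [Real.mul_rpow (by positivity) (by positivity), Real.mul_rpow hC₁.le (by positivity),
          ← Real.exp_mul, ← Real.exp_mul]
      rw [show (φ w + φ z) * p = p * (φ w + φ z) from by ring,
          show -(θ * ‖w - z‖) * p = -(p * θ * ‖w - z‖) from by ring]
    calc ‖K w z‖ ^ p / d ^ p * Real.exp (-(p * φ w))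
        ≤ (C₁ ^ p * Real.exp (p * (φ w + φ z)) * Real.exp (-(p * θ * ‖w - z‖)))
            / (C₂ ^ (p/2) * Real.exp (p * φ z)) * Real.exp (-(p * φ w)) := by
          apply mul_le_mul_of_nonneg_right _ (Real.exp_pos _).le
          exact div_le_div₀ (by positivity) h1 (by positivity) hdplow
      _ = C₁ ^ p / C₂ ^ (p/2) * Real.exp (-(p * θ * ‖w - z‖)) := by
          have hcomm : C₁ ^ p * Real.exp (p * (φ w + φ z)) * Real.exp (-(p * θ * ‖w - z‖))
              = C₁ ^ p * Real.exp (p * (φ w + φ z)) * Real.exp (-(p * θ * ‖w - z‖)) := rfl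
          apply halg
          · positivity
          · exact (Real.exp_pos _).ne'
          · rw [← Real.exp_add]; congr 1; ring
  -- continuity and integrability
  have hKcont : Continuous (fun w => K w z) := (hKanal z).continuous
  have hFcont : Continuous F := by
    rw [hF]
    apply Continuous.mul
    · apply Continuous.rpow_const
      · exact (hKcont.div_const _).norm
      · intro w; exact Or.inr hp.le
    · exact Real.continuous_exp.comp (continuous_const.mul hφ2.continuous).neg
  have hdom : Integrable (fun w : E => C₁ ^ p / C₂ ^ (p/2) * Real.exp (-(p * θ * ‖w - z‖)))
      volume := by
    have h0 : Integrable (fun x : E => Real.exp (-(p * θ * ‖x‖))) volume :=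
      aux_integrable_exp_neg_norm (mul_pos hp hθ)
    exact (h0.comp_sub_right z).const_mul _
  have hFint : Integrable F volume := by
    refine hdom.mono' hFcont.aestronglyMeasurable ?_
    filter_upwards with w
    rw [Real.norm_eq_abs, _root_.abs_of_nonneg (hFnonneg w)]
    exact hup w
  have hintUp : ∫ w, F w ≤ cUp := by
    calc ∫ w, F w ≤ ∫ w : E, C₁ ^ p / C₂ ^ (p/2) * Real.exp (-(p * θ * ‖w - z‖)) :=
        integral_mono hFint hdom hup
      _ = C₁ ^ p / C₂ ^ (p/2) * ∫ w : E, Real.exp (-(p * θ * ‖w - z‖)) :=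
        integral_const_mul _ _
      _ = cUp := by
        rw [hcUp]
        congr 1
        exact integral_sub_right_eq_self (fun x : E => Real.exp (-(p * θ * ‖x‖))) z
  -- lower bound machinery
  set u' : E →L[ℝ] ℝ := fderiv ℝ φ z with hu'
  set a : E := (InnerProductSpace.toDual ℝ E).symm u' with ha
  have hav : ∀ v : E, (inner ℂ a v).re = u' v := by
    intro v
    have h1 : (inner ℝ a v : ℝ) = u' v := by
      rw [ha]; exact InnerProductSpace.toDual_symm_apply
    have h2 : (inner ℝ a v : ℝ) = RCLike.re (inner ℂ a v) := real_inner_eq_re_inner ℂ a v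
    rw [h2] at h1
    simpa using h1
  set L : E →L[ℂ] ℂ := innerSL ℂ a with hL
  have hLv : ∀ v, (L v).re = u' v := by
    intro v
    rw [hL]
    exact hav v
  set g : E → ℂ := fun w => K w z * Complex.exp (-(L (w - z))) with hg
  have hgdiff : Differentiable ℂ g := by
    apply Differentiable.mul (hKanal z)
    exact Differentiable.cexp ((L.differentiable.comp (differentiable_id.sub_const z)).neg)
  have hgnorm : ∀ w, ‖g w‖ = ‖K w z‖ * Real.exp (-(u' (w - z))) := by
    intro w
    rw [hg]
    simp only
    rw [norm_mul, Complex.norm_exp, Complex.neg_re, hLv]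
  set Gf : E → ℂ := fun w => (g w) ^ N with hGf
  have hGdiff : Differentiable ℂ Gf := by
    rw [hGf]; exact hgdiff.pow N
  have hmv := aux_meanValue hGdiff z 1
  have hKzzC : K z z = (((K z z).re : ℝ) : ℂ) := by
    apply Complex.ext <;> simp [(hKdiag z).1]
  have hgz : g z = K z z := by
    rw [hg]
    simp only [sub_self, map_zero, neg_zero, Complex.exp_zero, mul_one]
  have hGz : ‖Gf z‖ = (K z z).re ^ N := by
    rw [hGf]
    simp only
    rw [norm_pow, hgz, hKzzC, Complex.norm_real, Real.norm_eq_abs, abs_of_pos hKzz]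
    simp
  set S : ℝ := C₁ * Real.exp (M/2) * Real.exp (2 * φ z) with hS
  have hSpos : 0 < S := by positivity
  have hu'low : ∀ w ∈ ball z 1, φ w - φ z - M/2 ≤ u' (w - z) := by
    intro w hw
    have hwz : ‖w - z‖ ≤ 1 := le_of_lt (by rwa [mem_ball, dist_eq_norm] at hw)
    have htw := htay z w
    have hsq : ‖w - z‖ ^ 2 ≤ 1 := by
      nlinarith [norm_nonneg (w - z)]
    have hquad : M / 2 * ‖w - z‖ ^ 2 ≤ M / 2 := by
      nlinarith [hsq, hM0.le]
    rw [hu']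
    linarith
  have hgle : ∀ w ∈ ball z 1, ‖g w‖ ≤ S := by
    intro w hw
    rw [hgnorm w]
    calc ‖K w z‖ * Real.exp (-(u' (w - z)))
        ≤ (C₁ * Real.exp (φ w + φ z) * Real.exp (-(θ * ‖w - z‖))) * Real.exp (-(u' (w - z))) :=
          mul_le_mul_of_nonneg_right (hKup w z) (Real.exp_pos _).le
      _ ≤ (C₁ * Real.exp (φ w + φ z) * 1) * Real.exp (-(φ w - φ z - M/2)) := by
          apply mul_le_mul _ _ (Real.exp_pos _).le (by positivity)
          · apply mul_le_mul_of_nonneg_left _ (by positivity)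
            exact Real.exp_le_one_iff.mpr (neg_nonpos.mpr (by positivity))
          · exact Real.exp_le_exp.mpr (by linarith [hu'low w hw])
      _ = S := by
          rw [hS, mul_one, mul_assoc, mul_assoc, ← Real.exp_add, ← Real.exp_add]
          congr 1
          rw [Real.exp_eq_exp]
          ring
  set cc : ℝ := Real.exp (-(p * φ z) - p * M / 2) / d ^ p * S ^ (p - (N:ℝ)) with hcc
  have hccpos : 0 < cc := by
    apply mul_pos (div_pos (Real.exp_pos _) hdppos) (Real.rpow_pos_of_pos hSpos _)
  have hFlow : ∀ w ∈ ball z 1, cc * ‖Gf w‖ ≤ F w := by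
    intro w hw
    have hGw : ‖Gf w‖ = ‖g w‖ ^ N := by
      rw [hGf]; simp only; rw [norm_pow]
    have hKw : ‖K w z‖ = ‖g w‖ * Real.exp (u' (w - z)) := by
      rw [hgnorm w, mul_assoc, ← Real.exp_add]
      simp
    rw [hFeq w, hGw, hKw]
    have hrpow : (‖g w‖ * Real.exp (u' (w - z))) ^ p
        = ‖g w‖ ^ p * Real.exp (p * u' (w - z)) := by
      rw [Real.mul_rpow (norm_nonneg _) (Real.exp_pos _).le, ← Real.exp_mul,
        show u' (w - z) * p = p * u' (w - z) from by ring]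
    rw [hrpow]
    have hNpos : 0 < N := Nat.ceil_pos.mpr hp
    rcases eq_or_lt_of_le (norm_nonneg (g w)) with h0 | h0
    · rw [← h0, zero_pow hNpos.ne', mul_zero, Real.zero_rpow hp.ne', zero_mul, zero_div,
        zero_mul]
    · have h1 : S ^ (p - (N:ℝ)) * ‖g w‖ ^ (N:ℝ) ≤ ‖g w‖ ^ p := by
        have h2 : ‖g w‖ ^ (p - (N:ℝ)) * ‖g w‖ ^ (N:ℝ) = ‖g w‖ ^ p := by
          rw [← Real.rpow_add h0]
          congr 1
          ring
        rw [← h2]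
        apply mul_le_mul_of_nonneg_right _ (Real.rpow_nonneg (norm_nonneg _) _)
        exact Real.rpow_le_rpow_of_nonpos h0 (hgle w hw) (by linarith)
      have hE : Real.exp (-(p * φ z) - p * M / 2)
          ≤ Real.exp (p * u' (w - z)) * Real.exp (-(p * φ w)) := by
        rw [← Real.exp_add]
        apply Real.exp_le_exp.mpr
        have h3 := mul_le_mul_of_nonneg_left (hu'low w hw) hp.le
        nlinarith
      calc cc * ‖g w‖ ^ N
          = (Real.exp (-(p * φ z) - p * M / 2) / d ^ p) * (S ^ (p - (N:ℝ)) * ‖g w‖ ^ (N:ℝ)) := by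
            rw [hcc, Real.rpow_natCast]
            ring
        _ ≤ (Real.exp (-(p * φ z) - p * M / 2) / d ^ p) * ‖g w‖ ^ p :=
            mul_le_mul_of_nonneg_left h1 (by positivity)
        _ = ‖g w‖ ^ p * Real.exp (-(p * φ z) - p * M / 2) * (d ^ p)⁻¹ := by ring
        _ ≤ ‖g w‖ ^ p * (Real.exp (p * u' (w - z)) * Real.exp (-(p * φ w))) * (d ^ p)⁻¹ := by
            apply mul_le_mul_of_nonneg_right _ (inv_nonneg.mpr hdppos.le)
            exact mul_le_mul_of_nonneg_left hE (by positivity)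
        _ = ‖g w‖ ^ p * Real.exp (p * u' (w - z)) / d ^ p * Real.exp (-(p * φ w)) := by
            rw [div_eq_mul_inv]; ring
  -- integral lower bound
  have hball : MeasurableSet (ball z 1) := measurableSet_ball
  have hGint : IntegrableOn (fun w => ‖Gf w‖) (ball z 1) volume := by
    apply IntegrableOn.mono_set _ ball_subset_closedBall
    exact (hGdiff.continuous.norm).continuousOn.integrableOn_compact (isCompact_closedBall z 1)
  have hccGint : IntegrableOn (fun w => cc * ‖Gf w‖) (ball z 1) volume := hGint.const_mul cc
  have hFBint : IntegrableOn F (ball z 1) volume := hFint.integrableOn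
  have hstep1 : ∫ w in ball z 1, cc * ‖Gf w‖ ≤ ∫ w in ball z 1, F w :=
    setIntegral_mono_on hccGint hFBint hball hFlow
  have hstep2 : cc * (vol1 * (K z z).re ^ N) ≤ ∫ w in ball z 1, cc * ‖Gf w‖ := by
    rw [integral_const_mul]
    apply mul_le_mul_of_nonneg_left _ hccpos.le
    have h4 : ‖∫ w in ball z 1, Gf w‖ ≤ ∫ w in ball z 1, ‖Gf w‖ := norm_integral_le_integral_norm _
    rw [hmv, norm_smul, Real.norm_eq_abs, _root_.abs_of_nonneg ENNReal.toReal_nonneg, hGz] at h4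
    have h5 : (volume (ball z 1)).toReal = vol1 := by
      rw [hvol1, Measure.addHaar_ball_center]
    rw [h5] at h4
    exact h4
  have hstep3 : ∫ w in ball z 1, F w ≤ ∫ w, F w := by
    apply setIntegral_le_integral hFint
    filter_upwards with w using hFnonneg w
  have hintLow : cc * (vol1 * (K z z).re ^ N) ≤ ∫ w, F w :=
    le_trans hstep2 (le_trans hstep1 hstep3)
  -- constant comparison
  have hKzzN : C₂ ^ N * Real.exp ((N:ℝ) * (2 * φ z)) ≤ (K z z).re ^ N := by
    have h6 := pow_le_pow_left₀ (by positivity) hKzzlow N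
    calc C₂ ^ N * Real.exp ((N:ℝ) * (2 * φ z)) = (C₂ * Real.exp (2 * φ z)) ^ N := by
          rw [mul_pow, Real.exp_nat_mul]
      _ ≤ (K z z).re ^ N := h6
  have hSval : S ^ (p - (N:ℝ))
      = (C₁ * Real.exp (M/2)) ^ (p - (N:ℝ)) * Real.exp ((2 * φ z) * (p - (N:ℝ))) := by
    rw [hS, Real.mul_rpow (by positivity) (Real.exp_pos _).le, ← Real.exp_mul]
  have hkey : cLow ≤ cc * (vol1 * (K z z).re ^ N) := by
    calc cLow = Real.exp (-(p * φ z) - p * M / 2) / (C₁ ^ (p/2) * Real.exp (p * φ z))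
          * ((C₁ * Real.exp (M/2)) ^ (p - (N:ℝ)) * Real.exp ((2 * φ z) * (p - (N:ℝ))))
          * (vol1 * (C₂ ^ N * Real.exp ((N:ℝ) * (2 * φ z)))) := by
          rw [hcLow]
          have hE : Real.exp (-(p * φ z) - p * M / 2) * Real.exp ((2 * φ z) * (p - (N:ℝ)))
              * Real.exp ((N:ℝ) * (2 * φ z)) = Real.exp (-(p * M / 2)) * Real.exp (p * φ z) := by
            rw [← Real.exp_add, ← Real.exp_add, ← Real.exp_add]
            congr 1
            ring
          rw [show ∀ (x b y zz : ℝ), x / b * y * zz = x * y * zz / b from fun x b y zz => by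
            ring]
          rw [div_eq_div_iff (by positivity) (by positivity)]
          linear_combination (-(vol1 * C₂ ^ N * (C₁ * Real.exp (M/2)) ^ (p - (N:ℝ))
            * C₁ ^ (p/2))) * hE
      _ ≤ cc * (vol1 * (K z z).re ^ N) := by
          rw [hcc, hSval]
          have f1 : Real.exp (-(p * φ z) - p * M / 2) / (C₁ ^ (p/2) * Real.exp (p * φ z))
              ≤ Real.exp (-(p * φ z) - p * M / 2) / d ^ p :=
            div_le_div_of_nonneg_left (Real.exp_pos _).le hdppos hdpup
          have f3 : vol1 * (C₂ ^ N * Real.exp ((N:ℝ) * (2 * φ z))) ≤ vol1 * (K z z).re ^ N :=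
            mul_le_mul_of_nonneg_left hKzzN hvol1pos.le
          apply mul_le_mul _ f3 (by positivity) _
          · exact mul_le_mul_of_nonneg_right f1 (by positivity)
          · have : (0:ℝ) ≤ Real.exp (-(p * φ z) - p * M / 2) / d ^ p :=
              le_of_lt (div_pos (Real.exp_pos _) hdppos)
            positivity
  have hfinalLow : cLow ≤ ∫ w, F w := hkey.trans hintLow
  have hFintNonneg : 0 ≤ ∫ w, F w := integral_nonneg hFnonneg
  constructor
  · have h6 : cLow ^ (1/p) ≤ (∫ w, F w) ^ (1/p) :=
      Real.rpow_le_rpow hcLowpos.le hfinalLow (by positivity)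
    have h7 : (max (cUp ^ (1/p)) ((cLow ^ (1/p))⁻¹))⁻¹ ≤ cLow ^ (1/p) := by
      have h8 := inv_anti₀ (by positivity : (0:ℝ) < (cLow ^ (1/p))⁻¹)
        (le_max_right (cUp ^ (1/p)) ((cLow ^ (1/p))⁻¹))
      rwa [inv_inv] at h8
    exact h7.trans h6
  · have h6 : (∫ w, F w) ^ (1/p) ≤ cUp ^ (1/p) :=
      Real.rpow_le_rpow hFintNonneg hintUp (by positivity)
    exact h6.trans (le_max_left _ _)
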